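/- Two finite abstract simplicial complexes K1 and K2 are isomorphic if and only if the colored graphs (Sd1(K1), dim) and (Sd1(K2), dim) are color-preserving isomorphic. -/

import Mathlib

open Finset

/-- A finite abstract simplicial complex on a vertex type `V`: a finite family of
finite sets that is closed under taking subsets (and contains the empty set). -/
structure AbstractComplex (V : Type*) [DecidableEq V] where
  simplices : Finset (Finset V)
  empty_mem : ∅ ∈ simplices
  downClosed : ∀ σ ∈ simplices, ∀ τ ⊆ σ, τ ∈ simplices

namespace AbstractComplex

variable {V : Type*} [DecidableEq V]

/-- The vertices of a complex `K`: the elements appearing in singletons of `K`. -/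
def Vert (K : AbstractComplex V) : Type _ := {a : V // ({a} : Finset V) ∈ K.simplices}

/-- The vertices of `Sd1 K`: the nonempty simplices of `K`. -/
def SdVert (K : AbstractComplex V) : Type _ :=
  {σ : Finset V // σ ∈ K.simplices ∧ σ.Nonempty}

/-- The 1-skeleton of the barycentric subdivision of `K`: vertices are the nonempty
simplices of `K`, and two simplices are adjacent iff one is a proper subset of
the other. -/
def Sd1 (K : AbstractComplex V) : SimpleGraph (SdVert K) where
  Adj σ τ := σ.1 ⊂ τ.1 ∨ τ.1 ⊂ σ.1
  symm := ⟨fun _ _ h => h.symm⟩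
  loopless := ⟨fun σ h => by
    rcases h with h | h <;> exact (ssubset_irrefl σ.1) h⟩

/-- The coloring `dim` on the vertices of `Sd1 K`: a simplex `σ` gets
color `|σ| - 1`. -/
def dimColor (K : AbstractComplex V) (σ : K.SdVert) : ℕ := σ.1.card - 1

instance (K : AbstractComplex V) : DecidableEq K.Vert :=
  inferInstanceAs (DecidableEq {a : V // ({a} : Finset V) ∈ K.simplices})

/-- Lift a simplex to a finset of vertices. -/
def lift (K : AbstractComplex V) (σ : Finset V) (h : σ ∈ K.simplices) : Finset K.Vert :=
  σ.attach.map ⟨fun x => ⟨x.1, K.downClosed σ h {x.1} (Finset.singleton_subset_iff.mpr x.2)⟩,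
    by
      intro a b hab
      have h : a.1 = b.1 := congrArg (fun t : K.Vert => t.1) hab
      exact Subtype.ext h⟩

lemma mem_lift {K : AbstractComplex V} {σ : Finset V} {h : σ ∈ K.simplices} {a : K.Vert} :
    a ∈ K.lift σ h ↔ a.1 ∈ σ := by
  unfold lift
  rw [Finset.mem_map]
  constructor
  · rintro ⟨x, hx, rfl⟩; exact x.2
  · intro hv
    exact ⟨⟨a.1, hv⟩, Finset.mem_attach _ _, Subtype.ext rfl⟩

lemma lift_image {K : AbstractComplex V} {σ : Finset V} {h : σ ∈ K.simplices} :
    (K.lift σ h).image (fun a => a.1) = σ := by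
  ext v
  simp only [Finset.mem_image]
  constructor
  · rintro ⟨a, ha, rfl⟩; exact mem_lift.mp ha
  · intro hv
    exact ⟨⟨v, K.downClosed σ h {v} (Finset.singleton_subset_iff.mpr hv)⟩, mem_lift.mpr hv, rfl⟩

lemma lift_card {K : AbstractComplex V} {σ : Finset V} {h : σ ∈ K.simplices} :
    (K.lift σ h).card = σ.card := by
  unfold lift
  rw [Finset.card_map, Finset.card_attach]

lemma lift_image_val {K : AbstractComplex V} {s : Finset K.Vert}
    (h : s.image (fun a => a.1) ∈ K.simplices) :
    K.lift (s.image (fun a => a.1)) h = s := by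
  ext a
  rw [mem_lift]
  simp only [Finset.mem_image]
  constructor
  · rintro ⟨b, hb, hba⟩; exact (Subtype.ext hba : b = a) ▸ hb
  · intro ha; exact ⟨a, ha, rfl⟩

end AbstractComplex

/-- `f` is an isomorphism between the simplicial complexes `K1` and `K2`:
a bijection between the vertices such that a finite set `{v₁, …, v_k}` of vertices
is a simplex of `K1` precisely when `{f v₁, …, f v_k}` is a simplex of `K2`. -/
def IsComplexIso {V1 V2 : Type*} [DecidableEq V1] [DecidableEq V2]
    (K1 : AbstractComplex V1) (K2 : AbstractComplex V2)
    (f : K1.Vert ≃ K2.Vert) : Prop :=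
  ∀ s : Finset K1.Vert,
    s.image (fun a => a.1) ∈ K1.simplices ↔
      s.image (fun a => (f a).1) ∈ K2.simplices

namespace AbstractComplex

section Forward

variable {V1 V2 : Type*} [DecidableEq V1] [DecidableEq V2]
variable {K1 : AbstractComplex V1} {K2 : AbstractComplex V2}

lemma isComplexIso_symm {f : K1.Vert ≃ K2.Vert} (hf : IsComplexIso K1 K2 f) :
    IsComplexIso K2 K1 f.symm := by
  intro s
  have h2 := hf (s.image ⇑f.symm)
  rw [Finset.image_image, Finset.image_image] at h2
  simp only [Function.comp_def, Equiv.apply_symm_apply] at h2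
  exact h2.symm

/-- The image of a simplex under a vertex bijection. -/
def imageF (f : K1.Vert ≃ K2.Vert) (σ : Finset V1) (h : σ ∈ K1.simplices) : Finset V2 :=
  (K1.lift σ h).image (fun a => (f a).1)

lemma mem_imageF {f : K1.Vert ≃ K2.Vert} {σ : Finset V1} {h : σ ∈ K1.simplices} {w : V2} :
    w ∈ imageF f σ h ↔ ∃ a : K1.Vert, a.1 ∈ σ ∧ (f a).1 = w := by
  unfold imageF
  simp only [Finset.mem_image]
  constructor
  · rintro ⟨a, ha, rfl⟩; exact ⟨a, mem_lift.mp ha, rfl⟩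
  · rintro ⟨a, ha, rfl⟩; exact ⟨a, mem_lift.mpr ha, rfl⟩

lemma injF (f : K1.Vert ≃ K2.Vert) :
    Function.Injective (fun a : K1.Vert => (f a).1) :=
  fun a b hab => f.injective (Subtype.ext hab)

lemma imageF_card {f : K1.Vert ≃ K2.Vert} {σ : Finset V1} {h : σ ∈ K1.simplices} :
    (imageF f σ h).card = σ.card := by
  rw [imageF, Finset.card_image_of_injective _ (injF f), lift_card]

lemma imageF_mem {f : K1.Vert ≃ K2.Vert} (hf : IsComplexIso K1 K2 f)
    {σ : Finset V1} (h : σ ∈ K1.simplices) : imageF f σ h ∈ K2.simplices :=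
  (hf (K1.lift σ h)).mp (by rw [lift_image]; exact h)

lemma imageF_roundtrip (f : K1.Vert ≃ K2.Vert) (σ : Finset V1) (h : σ ∈ K1.simplices)
    {h2 : imageF f σ h ∈ K2.simplices} :
    imageF f.symm (imageF f σ h) h2 = σ := by
  ext w
  simp only [mem_imageF]
  constructor
  · rintro ⟨b, ⟨a, ha, hab⟩, rfl⟩
    have hfa : f a = b := Subtype.ext hab
    subst hfa
    rwa [Equiv.symm_apply_apply]
  · intro hw
    refine ⟨f ⟨w, K1.downClosed σ h {w} (Finset.singleton_subset_iff.mpr hw)⟩,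
      ⟨⟨w, K1.downClosed σ h {w} (Finset.singleton_subset_iff.mpr hw)⟩, hw, rfl⟩, ?_⟩
    exact congrArg Subtype.val (f.symm_apply_apply _)

lemma imageF_ssubset_of (f : K1.Vert ≃ K2.Vert) {σ τ : Finset V1}
    (h1 : σ ∈ K1.simplices) (h2 : τ ∈ K1.simplices) (hst : σ ⊂ τ) :
    imageF f σ h1 ⊂ imageF f τ h2 := by
  have hsub : imageF f σ h1 ⊆ imageF f τ h2 := by
    intro w hw
    rcases mem_imageF.mp hw with ⟨a, ha, rfl⟩
    exact mem_imageF.mpr ⟨a, hst.subset ha, rfl⟩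
  refine hsub.ssubset_of_ne ?_
  intro hcontra
  have hc : (imageF f σ h1).card = (imageF f τ h2).card := by rw [hcontra]
  rw [imageF_card, imageF_card] at hc
  exact absurd hc (Finset.card_lt_card hst).ne

lemma imageF_ssubset (f : K1.Vert ≃ K2.Vert) (hf : IsComplexIso K1 K2 f) {σ τ : Finset V1}
    (h1 : σ ∈ K1.simplices) (h2 : τ ∈ K1.simplices) :
    imageF f σ h1 ⊂ imageF f τ h2 ↔ σ ⊂ τ := by
  constructor
  · intro hss
    have := imageF_ssubset_of f.symm (imageF_mem hf h1) (imageF_mem hf h2) hss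
    rwa [imageF_roundtrip, imageF_roundtrip] at this
  · exact imageF_ssubset_of f h1 h2

/-- The vertex-set equivalence induced by a complex isomorphism. -/
def sdEquiv (f : K1.Vert ≃ K2.Vert) (hf : IsComplexIso K1 K2 f) : K1.SdVert ≃ K2.SdVert where
  toFun σ := ⟨imageF f σ.1 σ.2.1, imageF_mem hf σ.2.1, by
    rw [← Finset.card_pos, imageF_card]; exact Finset.card_pos.mpr σ.2.2⟩
  invFun τ := ⟨imageF f.symm τ.1 τ.2.1, imageF_mem (isComplexIso_symm hf) τ.2.1, by
    rw [← Finset.card_pos, imageF_card]; exact Finset.card_pos.mpr τ.2.2⟩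
  left_inv σ := Subtype.ext (imageF_roundtrip f σ.1 σ.2.1)
  right_inv τ := Subtype.ext (by
    have := imageF_roundtrip f.symm τ.1 τ.2.1
      (h2 := imageF_mem (isComplexIso_symm hf) τ.2.1)
    simpa using this)

lemma sdEquiv_apply_val (f : K1.Vert ≃ K2.Vert) (hf : IsComplexIso K1 K2 f) (σ : K1.SdVert) :
    (sdEquiv f hf σ).1 = imageF f σ.1 σ.2.1 := rfl

/-- The graph isomorphism induced by a complex isomorphism. -/
def sdIso (f : K1.Vert ≃ K2.Vert) (hf : IsComplexIso K1 K2 f) : K1.Sd1 ≃g K2.Sd1 where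
  toEquiv := sdEquiv f hf
  map_rel_iff' := by
    intro σ τ
    show (imageF f σ.1 σ.2.1 ⊂ imageF f τ.1 τ.2.1 ∨ imageF f τ.1 τ.2.1 ⊂ imageF f σ.1 σ.2.1)
      ↔ (σ.1 ⊂ τ.1 ∨ τ.1 ⊂ σ.1)
    exact or_congr (imageF_ssubset f hf _ _) (imageF_ssubset f hf _ _)

lemma sdIso_apply_val (f : K1.Vert ≃ K2.Vert) (hf : IsComplexIso K1 K2 f) (σ : K1.SdVert) :
    (sdIso f hf σ).1 = imageF f σ.1 σ.2.1 := rfl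

end Forward

section Backward

variable {V1 V2 : Type*} [DecidableEq V1] [DecidableEq V2]
variable {K1 : AbstractComplex V1} {K2 : AbstractComplex V2}

lemma hcard_symm (φ : K1.Sd1 ≃g K2.Sd1) (hφ : ∀ v, ((φ v).1).card = (v.1).card) :
    ∀ w, ((φ.symm w).1).card = (w.1).card := by
  intro w
  have := hφ (φ.symm w)
  rw [RelIso.apply_symm_apply] at this
  exact this.symm

lemma phi_subset_of (φ : K1.Sd1 ≃g K2.Sd1) (hφ : ∀ v, ((φ v).1).card = (v.1).card)
    {σ τ : K1.SdVert} (h : σ.1 ⊆ τ.1) : (φ σ).1 ⊆ (φ τ).1 := by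
  by_cases heq : σ = τ
  · subst heq; exact Finset.Subset.refl _
  · have hss : σ.1 ⊂ τ.1 := h.ssubset_of_ne (fun he => heq (Subtype.ext he))
    have hadj : K2.Sd1.Adj (φ σ) (φ τ) := φ.map_rel_iff.mpr (Or.inl hss)
    rcases hadj with h1 | h1
    · exact h1.subset
    · exfalso
      have hc1 := Finset.card_lt_card hss
      have hc2 := Finset.card_lt_card h1
      rw [hφ, hφ] at hc2
      omega

/-- A singleton simplex as a vertex of `Sd1`. -/
def singVert (a : K1.Vert) : K1.SdVert := ⟨{a.1}, a.2, Finset.singleton_nonempty _⟩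

lemma phi_sing_card (φ : K1.Sd1 ≃g K2.Sd1) (hφ : ∀ v, ((φ v).1).card = (v.1).card)
    (a : K1.Vert) : ((φ (singVert a)).1).card = 1 := by
  rw [hφ]; simp [singVert]

/-- The vertex map induced by a color-preserving graph isomorphism of `Sd1`s. -/
noncomputable def vmap (φ : K1.Sd1 ≃g K2.Sd1) (hφ : ∀ v, ((φ v).1).card = (v.1).card)
    (a : K1.Vert) : K2.Vert :=
  ⟨(Finset.card_eq_one.mp (phi_sing_card φ hφ a)).choose, by
    have hb := (Finset.card_eq_one.mp (phi_sing_card φ hφ a)).choose_spec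
    rw [← hb]
    exact (φ (singVert a)).2.1⟩

lemma vmap_spec (φ : K1.Sd1 ≃g K2.Sd1) (hφ : ∀ v, ((φ v).1).card = (v.1).card)
    (a : K1.Vert) : (φ (singVert a)).1 = {(vmap φ hφ a).1} :=
  (Finset.card_eq_one.mp (phi_sing_card φ hφ a)).choose_spec

lemma vmap_mem (φ : K1.Sd1 ≃g K2.Sd1) (hφ : ∀ v, ((φ v).1).card = (v.1).card)
    {σ : K1.SdVert} {a : K1.Vert} (ha : a.1 ∈ σ.1) : (vmap φ hφ a).1 ∈ (φ σ).1 := by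
  have hsub : (singVert a).1 ⊆ σ.1 := Finset.singleton_subset_iff.mpr ha
  have := phi_subset_of φ hφ hsub
  rw [vmap_spec φ hφ] at this
  exact this (Finset.mem_singleton_self _)

lemma vmap_inj (φ : K1.Sd1 ≃g K2.Sd1) (hφ : ∀ v, ((φ v).1).card = (v.1).card) :
    Function.Injective (vmap φ hφ) := by
  intro a b hab
  have h1 : (φ (singVert a)).1 = (φ (singVert b)).1 := by
    rw [vmap_spec φ hφ, vmap_spec φ hφ, hab]
  have h2 : φ (singVert a) = φ (singVert b) := Subtype.ext h1
  have h3 : singVert a = singVert b := φ.injective h2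
  have h4 : ({a.1} : Finset V1) = {b.1} := congrArg Subtype.val h3
  exact Subtype.ext (Finset.singleton_inj.mp h4)

lemma phi_eq (φ : K1.Sd1 ≃g K2.Sd1) (hφ : ∀ v, ((φ v).1).card = (v.1).card)
    (σ : K1.SdVert) :
    (φ σ).1 = (K1.lift σ.1 σ.2.1).image (fun a => (vmap φ hφ a).1) := by
  symm
  apply Finset.eq_of_subset_of_card_le
  · intro w hw
    rcases Finset.mem_image.mp hw with ⟨a, ha, rfl⟩
    exact vmap_mem φ hφ (mem_lift.mp ha)
  · rw [Finset.card_image_of_injective _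
      (fun a b hab => vmap_inj φ hφ (Subtype.ext hab)), lift_card, hφ]

lemma vmap_leftInv (φ : K1.Sd1 ≃g K2.Sd1) (hφ : ∀ v, ((φ v).1).card = (v.1).card)
    (a : K1.Vert) : vmap φ.symm (hcard_symm φ hφ) (vmap φ hφ a) = a := by
  have h1 : singVert (vmap φ hφ a) = φ (singVert a) :=
    Subtype.ext (vmap_spec φ hφ a).symm
  have h2 := vmap_spec φ.symm (hcard_symm φ hφ) (vmap φ hφ a)
  rw [h1, RelIso.symm_apply_apply] at h2
  have h3 : ({a.1} : Finset V1) = {(vmap φ.symm (hcard_symm φ hφ) (vmap φ hφ a)).1} := h2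
  exact Subtype.ext (Finset.singleton_inj.mp h3.symm)

lemma main_dir (φ : K1.Sd1 ≃g K2.Sd1) (hφ : ∀ v, ((φ v).1).card = (v.1).card)
    (s : Finset K1.Vert) (hs : s.image (fun a => a.1) ∈ K1.simplices) :
    s.image (fun a => (vmap φ hφ a).1) ∈ K2.simplices := by
  rcases s.eq_empty_or_nonempty with rfl | hne
  · simpa using K2.empty_mem
  · have hmem := (φ ⟨s.image (fun a => a.1), hs, hne.image _⟩).2.1
    have heq := phi_eq φ hφ ⟨s.image (fun a => a.1), hs, hne.image _⟩
    rw [lift_image_val] at heq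
    rw [heq] at hmem
    exact hmem

end Backward

end AbstractComplex

open AbstractComplex in
/-- Two finite abstract simplicial complexes `K1` and `K2` are isomorphic if and
only if the colored graphs `(Sd1 K1, dim)` and `(Sd1 K2, dim)` are
color-preserving isomorphic. -/
theorem complexIso_iff_sd1_colorIso
    {V1 V2 : Type*} [DecidableEq V1] [DecidableEq V2]
    (K1 : AbstractComplex V1) (K2 : AbstractComplex V2) :
    (∃ f : K1.Vert ≃ K2.Vert, IsComplexIso K1 K2 f) ↔
      (∃ φ : K1.Sd1 ≃g K2.Sd1, ∀ v, K2.dimColor (φ v) = K1.dimColor v) := by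
  constructor
  · rintro ⟨f, hf⟩
    refine ⟨sdIso f hf, fun v => ?_⟩
    unfold AbstractComplex.dimColor
    rw [sdIso_apply_val f hf v, imageF_card]
  · rintro ⟨φ, hcol⟩
    have hφ : ∀ v, ((φ v).1).card = (v.1).card := by
      intro v
      have h1 : 1 ≤ ((φ v).1).card := Finset.card_pos.mpr (φ v).2.2
      have h2 : 1 ≤ (v.1).card := Finset.card_pos.mpr v.2.2
      have h3 := hcol v
      unfold AbstractComplex.dimColor at h3
      omega
    have hφs := hcard_symm φ hφ
    refine ⟨⟨vmap φ hφ, vmap φ.symm hφs, vmap_leftInv φ hφ,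
      fun b => vmap_leftInv φ.symm hφs b⟩, ?_⟩
    intro s
    show s.image (fun a => a.1) ∈ K1.simplices ↔ s.image (fun a => (vmap φ hφ a).1) ∈ K2.simplices
    constructor
    · intro hs
      exact main_dir φ hφ s hs
    · intro hs
      have hs' : (s.image (vmap φ hφ)).image (fun a => a.1) ∈ K2.simplices := by
        rw [Finset.image_image]
        exact hs
      have hmain := main_dir φ.symm hφs (s.image (vmap φ hφ)) hs'
      rw [Finset.image_image] at hmain
      have heq : s.image ((fun b => (vmap φ.symm hφs b).1) ∘ vmap φ hφ)
          = s.image (fun a => a.1) := by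
        apply Finset.image_congr
        intro a _
        show (vmap φ.symm hφs (vmap φ hφ a)).1 = a.1
        rw [vmap_leftInv φ hφ a]
      rwa [heq] at hmain
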